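/- Consider an N-level system where, at level ℓ, d/dt f̄^{(ℓ)} = Var^{(ℓ)} + E^{(ℓ)} with E^{(ℓ)} ≥ −γ_ℓ Var^{(ℓ)} − Σ_{ℓ'≠ℓ} β_{ℓℓ'} Var^{(ℓ')}, where γ_ℓ ∈ [0,1) and β_{ℓℓ'} ≥ 0. Define the gain matrix Γ with Γ_{ℓℓ} = 0 and Γ_{ℓℓ'} = β_{ℓℓ'}/(1 − γ_ℓ) for ℓ' ≠ ℓ, and suppose ρ(Γ) < 1. Then with weights α_ℓ = v_ℓ/(1 − γ_ℓ) where v = (I − Γᵀ)^{−1}𝟙, the function Ψ = Σ_ℓ α_ℓ f̄^{(ℓ)} satisfies dΨ/dt ≥ Σ_ℓ Var^{(ℓ)} ≥ 0. -/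

import Mathlib

open Finset Matrix

/-- G1 (N-level Lyapunov): under the level-wise Price decomposition with externality
bounds and the small-gain condition ρ(Γ) < 1, the weighted potential
Ψ = Σ_ℓ α_ℓ f̄^{(ℓ)} with α_ℓ = v_ℓ/(1−γ_ℓ), v = (I−Γᵀ)⁻¹𝟙, satisfies
dΨ/dt ≥ Σ_ℓ Var^{(ℓ)} ≥ 0. -/
theorem g1_nlevel_lyapunov (N : ℕ) (fbar Var E : Fin N → ℝ → ℝ)
    (γ : Fin N → ℝ) (β : Fin N → Fin N → ℝ)
    (hγ : ∀ ℓ, γ ℓ ∈ Set.Ico (0 : ℝ) 1)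
    (hβ : ∀ ℓ ℓ', 0 ≤ β ℓ ℓ') (hβdiag : ∀ ℓ, β ℓ ℓ = 0)
    (hVar : ∀ ℓ t, 0 ≤ Var ℓ t)
    (hderiv : ∀ ℓ t, HasDerivAt (fbar ℓ) (Var ℓ t + E ℓ t) t)
    (hE : ∀ ℓ t, -(γ ℓ * Var ℓ t) - ∑ ℓ', β ℓ ℓ' * Var ℓ' t ≤ E ℓ t)
    (Γm : Matrix (Fin N) (Fin N) ℝ)
    (hΓm : Γm = Matrix.of fun ℓ ℓ' => β ℓ ℓ' / (1 - γ ℓ))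
    (hρ : spectralRadius ℝ Γm < 1)
    (v : Fin N → ℝ) (hv : v = (1 - Γmᵀ)⁻¹ *ᵥ fun _ => (1 : ℝ))
    (α : Fin N → ℝ) (hα : ∀ ℓ, α ℓ = v ℓ / (1 - γ ℓ)) :
    ∀ t : ℝ,
      HasDerivAt (fun s => ∑ ℓ, α ℓ * fbar ℓ s)
        (∑ ℓ, α ℓ * (Var ℓ t + E ℓ t)) t ∧
      (∑ ℓ, Var ℓ t) ≤ ∑ ℓ, α ℓ * (Var ℓ t + E ℓ t) ∧
      0 ≤ ∑ ℓ, Var ℓ t := by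
  have hγpos : ∀ ℓ, 0 < 1 - γ ℓ := fun ℓ => by have := (hγ ℓ).2; linarith
  have hΓnn : ∀ ℓ ℓ', 0 ≤ Γm ℓ ℓ' := by
    intro ℓ ℓ'
    rw [hΓm]
    exact div_nonneg (hβ ℓ ℓ') (hγpos ℓ).le
  -- the parametrized matrix M s = 1 - s • Γmᵀ
  set M : ℝ → Matrix (Fin N) (Fin N) ℝ := fun s => 1 - s • Γmᵀ with hM
  -- nonvanishing of the determinant on [0,1]
  have hdet : ∀ s ∈ Set.Icc (0:ℝ) 1, (M s).det ≠ 0 := by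
    intro s hs hdet0
    rcases eq_or_lt_of_le hs.1 with h0 | h0
    · rw [← h0] at hdet0
      simp [hM] at hdet0
    · -- s > 0 : then s⁻¹ would be in the spectrum of Γm
      have hsne : s ≠ 0 := ne_of_gt h0
      have hfact : algebraMap ℝ (Matrix (Fin N) (Fin N) ℝ) s⁻¹ - Γm
          = s⁻¹ • (1 - s • Γm) := by
        rw [Algebra.algebraMap_eq_smul_one, smul_sub, smul_smul,
          inv_mul_cancel₀ hsne, one_smul]
      have hdetT : (1 - s • Γm).det = 0 := by
        have : (1 - s • Γm)ᵀ = M s := by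
          simp [hM, Matrix.transpose_sub, Matrix.transpose_smul]
        rw [← Matrix.det_transpose, this, hdet0]
      have hdet1 : (algebraMap ℝ (Matrix (Fin N) (Fin N) ℝ) s⁻¹ - Γm).det = 0 := by
        rw [hfact, Matrix.det_smul, hdetT, mul_zero]
      have hnu : ¬ IsUnit (algebraMap ℝ (Matrix (Fin N) (Fin N) ℝ) s⁻¹ - Γm) := by
        rw [Matrix.isUnit_iff_isUnit_det, hdet1]
        exact fun h => h.ne_zero rfl
      have hmem : s⁻¹ ∈ spectrum ℝ Γm := spectrum.mem_iff.mpr hnu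
      have hle : (‖s⁻¹‖₊ : ENNReal) ≤ spectralRadius ℝ Γm := by
        exact le_iSup₂ (f := fun k (_ : k ∈ spectrum ℝ Γm) => (‖k‖₊ : ENNReal)) s⁻¹ hmem
      have h1s : (1:ℝ) ≤ s⁻¹ := by
        have h := inv_anti₀ h0 hs.2
        rwa [inv_one] at h
      have h1n : (1 : ENNReal) ≤ (‖s⁻¹‖₊ : ENNReal) := by
        rw [ENNReal.one_le_coe_iff]
        have : (1:ℝ) ≤ ‖s⁻¹‖ := by
          rw [Real.norm_eq_abs, abs_of_nonneg (by linarith)]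
          exact h1s
        exact_mod_cast this
      exact absurd (lt_of_le_of_lt (le_trans h1n hle) hρ) (lt_irrefl _)
  -- the candidate weight vector as a function of s
  set w : ℝ → Fin N → ℝ := fun s => (M s)⁻¹ *ᵥ (fun _ => (1:ℝ)) with hw
  -- fixed point equation
  have key : ∀ s ∈ Set.Icc (0:ℝ) 1, ∀ ℓ, w s ℓ = 1 + s * ∑ ℓ', Γm ℓ' ℓ * w s ℓ' := by
    intro s hs ℓ
    have hu : IsUnit (M s).det := isUnit_iff_ne_zero.mpr (hdet s hs)
    have h1 : (M s) *ᵥ w s = fun _ => (1:ℝ) := by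
      rw [hw]
      rw [Matrix.mulVec_mulVec, Matrix.mul_nonsing_inv _ hu, Matrix.one_mulVec]
    have h2 := congrFun h1 ℓ
    have h3 : (M s *ᵥ w s) ℓ = w s ℓ - s * ∑ ℓ', Γm ℓ' ℓ * w s ℓ' := by
      rw [hM]
      rw [Matrix.sub_mulVec, Matrix.smul_mulVec, Matrix.one_mulVec]
      simp [Matrix.mulVec, dotProduct, Matrix.transpose_apply]
    rw [h3] at h2
    linarith
  -- continuity of each coordinate of w on [0,1]
  have hMcont : Continuous M := by
    rw [hM]
    exact continuous_const.sub (continuous_id.smul continuous_const)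
  have hwcont : ∀ ℓ, ContinuousOn (fun s => w s ℓ) (Set.Icc (0:ℝ) 1) := by
    intro ℓ
    have hweq : ∀ s, w s ℓ = ((M s).det)⁻¹ * ∑ ℓ', (M s).adjugate ℓ ℓ' := by
      intro s
      rw [hw]
      simp only [Matrix.inv_def, Matrix.mulVec, dotProduct, Matrix.smul_apply,
        Ring.inverse_eq_inv', smul_eq_mul, mul_one]
      rw [Finset.mul_sum]
    simp only [hweq]
    apply ContinuousOn.mul
    · exact ContinuousOn.inv₀ hMcont.matrix_det.continuousOn hdet
    · apply continuousOn_finset_sum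
      intro ℓ' _
      exact (((continuous_apply ℓ').comp ((continuous_apply ℓ).comp
        hMcont.matrix_adjugate)).continuousOn)
  -- positivity: w s ℓ ≥ 1 on [0,1]
  have hpos : ∀ s ∈ Set.Icc (0:ℝ) 1, ∀ ℓ, 1 ≤ w s ℓ := by
    by_contra hcon
    push_neg at hcon
    obtain ⟨s₀, hs₀, ℓ₀, hℓ₀⟩ := hcon
    have : Nonempty (Fin N) := ⟨ℓ₀⟩
    have hne : (Finset.univ : Finset (Fin N)).Nonempty := Finset.univ_nonempty
    set g : ℝ → ℝ := fun s => Finset.univ.inf' hne (fun ℓ => w s ℓ) with hg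
    have hgcont : ContinuousOn g (Set.Icc (0:ℝ) 1) := by
      rw [hg]
      exact ContinuousOn.finset_inf'_apply hne (fun ℓ _ => hwcont ℓ)
    have hg0 : g 0 = 1 := by
      have hw0 : ∀ ℓ, w 0 ℓ = 1 := by
        intro ℓ
        rw [hw]
        simp [hM]
      rw [hg]
      simp only [hw0]
      apply Finset.inf'_const
    -- if g s ≥ 0 then g s ≥ 1
    have hstep : ∀ s ∈ Set.Icc (0:ℝ) 1, 0 ≤ g s → 1 ≤ g s := by
      intro s hs hgs
      rw [hg]
      rw [Finset.le_inf'_iff]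
      intro ℓ _
      rw [key s hs ℓ]
      have : 0 ≤ s * ∑ ℓ', Γm ℓ' ℓ * w s ℓ' := by
        apply mul_nonneg hs.1
        apply Finset.sum_nonneg
        intro ℓ' _
        apply mul_nonneg (hΓnn ℓ' ℓ)
        exact le_trans hgs (Finset.inf'_le _ (Finset.mem_univ ℓ'))
      linarith
    have hgs₀ : g s₀ < 1 := lt_of_le_of_lt (Finset.inf'_le _ (Finset.mem_univ ℓ₀)) hℓ₀
    have hgs₀neg : g s₀ < 0 := by
      by_contra h
      push_neg at h
      exact absurd (hstep s₀ hs₀ h) (not_le.mpr hgs₀)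
    -- intermediate value theorem on [0, s₀]
    have hsub : Set.Icc (0:ℝ) s₀ ⊆ Set.Icc (0:ℝ) 1 := Set.Icc_subset_Icc le_rfl hs₀.2
    have hivt := intermediate_value_Icc' hs₀.1 (hgcont.mono hsub)
    have hmem : (1/2 : ℝ) ∈ Set.Icc (g s₀) (g 0) := by
      constructor
      · linarith
      · rw [hg0]; linarith
    obtain ⟨s₁, hs₁, hgs₁⟩ := hivt hmem
    have h01 : s₁ ∈ Set.Icc (0:ℝ) 1 := hsub hs₁
    have := hstep s₁ h01 (by rw [hgs₁]; norm_num)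
    rw [hgs₁] at this
    linarith
  -- v equals w 1
  have hv1 : v = w 1 := by
    rw [hv, hw, hM]
    simp
  have hvge : ∀ ℓ, 1 ≤ v ℓ := by
    intro ℓ
    rw [hv1]
    exact hpos 1 (by norm_num) ℓ
  have hveq : ∀ ℓ, v ℓ = 1 + ∑ ℓ', Γm ℓ' ℓ * v ℓ' := by
    intro ℓ
    rw [hv1]
    exact key 1 (by norm_num) ℓ |>.trans (by rw [one_mul])
  intro t
  refine ⟨?_, ?_, Finset.sum_nonneg fun ℓ _ => hVar ℓ t⟩
  · exact HasDerivAt.fun_sum fun ℓ _ => (hderiv ℓ t).const_mul (α ℓ)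
  · -- the main inequality
    have hαnn : ∀ ℓ, 0 ≤ α ℓ := by
      intro ℓ
      rw [hα]
      exact div_nonneg (by linarith [hvge ℓ]) (hγpos ℓ).le
    have step : ∀ ℓ, v ℓ * Var ℓ t - ∑ ℓ', (Γm ℓ ℓ' * v ℓ) * Var ℓ' t
        ≤ α ℓ * (Var ℓ t + E ℓ t) := by
      intro ℓ
      have h2 : (1 - γ ℓ) * Var ℓ t - ∑ ℓ', β ℓ ℓ' * Var ℓ' t ≤ Var ℓ t + E ℓ t := by
        have hEx := hE ℓ t
        have hexp : (1 - γ ℓ) * Var ℓ t = Var ℓ t - γ ℓ * Var ℓ t := by ring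
        linarith
      have h3 := mul_le_mul_of_nonneg_left h2 (hαnn ℓ)
      have e1 : α ℓ * ((1 - γ ℓ) * Var ℓ t - ∑ ℓ', β ℓ ℓ' * Var ℓ' t)
          = v ℓ * Var ℓ t - ∑ ℓ', (Γm ℓ ℓ' * v ℓ) * Var ℓ' t := by
        rw [mul_sub, Finset.mul_sum]
        congr 1
        · have hne' : (1 - γ ℓ) ≠ 0 := (hγpos ℓ).ne'
          rw [hα]
          field_simp
        · apply Finset.sum_congr rfl
          intro ℓ' _
          rw [hα, hΓm]
          simp only [Matrix.of_apply]
          field_simp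
      rw [← e1]
      exact h3
    calc ∑ ℓ, Var ℓ t
        = ∑ ℓ, (v ℓ * Var ℓ t - ∑ ℓ', (Γm ℓ ℓ' * v ℓ) * Var ℓ' t) := by
          rw [Finset.sum_sub_distrib, Finset.sum_comm]
          have hinner : ∀ ℓ', ∑ ℓ, (Γm ℓ ℓ' * v ℓ) * Var ℓ' t
              = (v ℓ' - 1) * Var ℓ' t := by
            intro ℓ'
            rw [← Finset.sum_mul]
            congr 1
            have := hveq ℓ'
            linarith
          rw [Finset.sum_congr rfl fun ℓ' _ => hinner ℓ']
          rw [← Finset.sum_sub_distrib]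
          apply Finset.sum_congr rfl
          intro ℓ _
          ring
      _ ≤ ∑ ℓ, α ℓ * (Var ℓ t + E ℓ t) := Finset.sum_le_sum fun ℓ _ => step ℓ
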